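/- Let P and Q be finite nonempty posets, and assume P is connected, P is not a chain, and P is co-rooted. Then the duality condition L(P,Q)^∨ = L(Q,P)^τ holds if and only if Q is co-rooted. -/

import Mathlib

open MvPolynomial

/-- The ideal `L(P,Q)` generated by the monomials `u_φ = ∏_{p∈P} x_{p,φ(p)}`
over all isotone maps `φ : P → Q`. -/
noncomputable def isoL (P Q K : Type*) [PartialOrder P] [PartialOrder Q] [Fintype P]
    [Field K] : Ideal (MvPolynomial (P × Q) K) :=
  Ideal.span { u | ∃ φ : P →o Q, u = ∏ p : P, X (p, φ p) }

/-- The Alexander dual `L(P,Q)^∨ = ⋂_{φ} (x_{p,φ(p)} : p ∈ P)`. -/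
noncomputable def isoDual (P Q K : Type*) [PartialOrder P] [PartialOrder Q]
    [Field K] : Ideal (MvPolynomial (P × Q) K) :=
  ⨅ φ : P →o Q, Ideal.span { u | ∃ p : P, u = X (p, φ p) }

/-- The ideal `L(Q,P)^τ ⊆ K[x_{pq}]` generated by `∏_{q∈Q} x_{ψ(q),q}` for `ψ ∈ Hom(Q,P)`. -/
noncomputable def isoTau (P Q K : Type*) [PartialOrder P] [PartialOrder Q] [Fintype Q]
    [Field K] : Ideal (MvPolynomial (P × Q) K) :=
  Ideal.span { u | ∃ ψ : Q →o P, u = ∏ q : Q, X (ψ q, q) }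

/-- The prime ideal `𝔭_ψ = (x_{ψ(q),q} : q ∈ Q)`. -/
noncomputable def pPsi (P Q K : Type*) [PartialOrder P] [PartialOrder Q]
    [Field K] (ψ : Q →o P) : Ideal (MvPolynomial (P × Q) K) :=
  Ideal.span { u | ∃ q : Q, u = X (ψ q, q) }

/-- The height of an ideal: the infimum of the heights (in the prime spectrum)
of the prime ideals containing it. -/
noncomputable def idealHeight {R : Type*} [CommRing R] (I : Ideal R) : ℕ∞ :=
  ⨅ J : {J : PrimeSpectrum R // I ≤ J.asIdeal}, Order.height J.1

/-- `P` is connected: any two elements are linked by a chain of comparabilities. -/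
def PosetConnected (P : Type*) [PartialOrder P] : Prop :=
  ∀ a b : P, Relation.ReflTransGen (fun x y : P => x ≤ y ∨ y ≤ x) a b

/-- `P` is rooted: two incomparable elements have no common strict upper bound. -/
def Rooted (P : Type*) [PartialOrder P] : Prop :=
  ∀ p₁ p₂ p : P, ¬ p₁ ≤ p₂ → ¬ p₂ ≤ p₁ → ¬ (p₁ < p ∧ p₂ < p)

/-- `P` is co-rooted: two incomparable elements have no common strict lower bound. -/
def CoRooted (P : Type*) [PartialOrder P] : Prop :=
  ∀ p₁ p₂ p : P, ¬ p₁ ≤ p₂ → ¬ p₂ ≤ p₁ → ¬ (p < p₁ ∧ p < p₂)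

/-- `P` is a chain, i.e. totally ordered. -/
def IsChainPoset (P : Type*) [PartialOrder P] : Prop :=
  ∀ a b : P, a ≤ b ∨ b ≤ a


lemma ncard_lt_of_lt {α : Type*} [PartialOrder α] [Finite α] {c q : α} (h : c < q) :
    {y | y < c}.ncard < {y | y < q}.ncard := by
  apply Set.ncard_lt_ncard
  · exact ⟨fun x hx => lt_trans hx h, fun hsub => absurd (hsub h) (lt_irrefl c)⟩
  · exact Set.toFinite _

lemma ncard_gt_of_lt {α : Type*} [PartialOrder α] [Finite α] {p p' : α} (h : p < p') :
    {y | p' < y}.ncard < {y | p < y}.ncard := by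
  apply Set.ncard_lt_ncard
  · exact ⟨fun x hx => lt_trans h hx, fun hsub => absurd (hsub h) (lt_irrefl p')⟩
  · exact Set.toFinite _

/-- The recursively defined sets `A_q`. -/
def Aset {P Q : Type*} [PartialOrder P] [PartialOrder Q] [Finite Q]
    (S : Set (P × Q)) (q : Q) : Set P :=
  {p | (p, q) ∈ S ∧ ∀ c, c < q → ∃ a ∈ Aset S c, a ≤ p}
termination_by {y | y < q}.ncard
decreasing_by exact ncard_lt_of_lt (by assumption)

lemma Aset_mem {P Q : Type*} [PartialOrder P] [PartialOrder Q] [Finite Q]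
    {S : Set (P × Q)} {q : Q} {p : P} :
    p ∈ Aset S q ↔ (p, q) ∈ S ∧ ∀ c, c < q → ∃ a ∈ Aset S c, a ≤ p := by
  conv_lhs => rw [Aset]
  rfl

lemma exists_least_gt {α : Type*} [PartialOrder α] [Finite α]
    (hco : ∀ p₁ p₂ p : α, ¬ p₁ ≤ p₂ → ¬ p₂ ≤ p₁ → ¬ (p < p₁ ∧ p < p₂))
    (p : α) (h : ∃ y, p < y) : ∃ m, p < m ∧ ∀ y, p < y → m ≤ y := by
  classical
  cases nonempty_fintype α
  obtain ⟨y0, hy0⟩ := h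
  have hne : (Finset.univ.filter (fun y => p < y)).Nonempty := ⟨y0, by simp [hy0]⟩
  obtain ⟨m, hm, hmin⟩ : ∃ m ∈ Finset.univ.filter (fun y => p < y),
      ∀ x ∈ Finset.univ.filter (fun y => p < y), ¬ x < m := by
    obtain ⟨m, hm⟩ := Finset.exists_minimal hne
    exact ⟨m, hm.1, fun x hx (hlt : _ < _) => not_le_of_gt hlt (hm.2 hx (le_of_lt hlt))⟩
  simp only [Finset.mem_filter, Finset.mem_univ, true_and] at hm
  refine ⟨m, hm, fun y hy => ?_⟩
  by_contra hmy
  have hym : ¬ y ≤ m := by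
    intro hle
    rcases eq_or_lt_of_le hle with rfl | hlt
    · exact hmy le_rfl
    · exact hmin y (by simp [hy]) hlt
  exact hco m y p hmy hym ⟨hm, hy⟩

open scoped Classical in
/-- The least strict upper bound ("parent"), junk value if maximal. -/
noncomputable def nextUp {α : Type*} [PartialOrder α] [Finite α]
    (hco : ∀ p₁ p₂ p : α, ¬ p₁ ≤ p₂ → ¬ p₂ ≤ p₁ → ¬ (p < p₁ ∧ p < p₂)) (p : α) : α :=
  if h : ∃ y, p < y then (exists_least_gt hco p h).choose else p

lemma nextUp_gt {α : Type*} [PartialOrder α] [Finite α] {hco} {p : α} (h : ∃ y, p < y) :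
    p < nextUp hco p := by
  rw [nextUp, dif_pos h]; exact (exists_least_gt hco p h).choose_spec.1

lemma nextUp_le {α : Type*} [PartialOrder α] [Finite α] {hco} {p : α} (h : ∃ y, p < y)
    {y : α} (hy : p < y) : nextUp hco p ≤ y := by
  rw [nextUp, dif_pos h]; exact (exists_least_gt hco p h).choose_spec.2 y hy

section Main
variable {P Q : Type*} [PartialOrder P] [PartialOrder Q] [Finite P] [Finite Q]

lemma descend (S : Set (P × Q)) (p : P) :
    ∀ q : Q, (∀ a ∈ Aset S q, ¬ a ≤ p) →
      ∃ q', q' ≤ q ∧ (∀ a ∈ Aset S q', ¬ a ≤ p) ∧ (p, q') ∉ S := by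
  have wf : WellFounded ((· < ·) : Q → Q → Prop) := wellFounded_lt
  intro q
  induction q using WellFounded.induction wf with
  | _ q IH =>
    intro hq
    by_cases hS : (p, q) ∈ S
    · have hpA : p ∉ Aset S q := fun hp => hq p hp le_rfl
      rw [Aset_mem] at hpA
      push_neg at hpA
      obtain ⟨c, hc, hcA⟩ := hpA hS
      obtain ⟨q', hq1, hq2, hq3⟩ := IH c hc hcA
      exact ⟨q', le_of_lt (lt_of_le_of_lt hq1 hc), hq2, hq3⟩
    · exact ⟨q, le_rfl, hq, hS⟩
end Main

set_option linter.unusedSectionVars false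

section Main2
variable {P Q : Type*} [PartialOrder P] [PartialOrder Q] [Finite P] [Finite Q]

open scoped Classical in
noncomputable def dsc (S : Set (P × Q)) (p : P) (q : Q) : Q :=
  if h : (∀ a ∈ Aset S q, ¬ a ≤ p) then (descend S p q h).choose else q

lemma dsc_le {S : Set (P × Q)} {p : P} {q : Q} : dsc S p q ≤ q := by
  rw [dsc]; split
  · exact (descend S p q (by assumption)).choose_spec.1
  · exact le_rfl

lemma dsc_spec {S : Set (P × Q)} {p : P} {q : Q} (h : ∀ a ∈ Aset S q, ¬ a ≤ p) :
    (∀ a ∈ Aset S (dsc S p q), ¬ a ≤ p) ∧ (p, dsc S p q) ∉ S := by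
  rw [dsc, dif_pos h]
  exact ⟨(descend S p q h).choose_spec.2.1, (descend S p q h).choose_spec.2.2⟩

open scoped Classical in
noncomputable def phiF
    (hco : ∀ p₁ p₂ p : P, ¬ p₁ ≤ p₂ → ¬ p₂ ≤ p₁ → ¬ (p < p₁ ∧ p < p₂))
    (S : Set (P × Q)) (r₀ : Q) (p : P) : Q :=
  dsc S p (if h : ∃ y, p < y then phiF hco S r₀ (nextUp hco p) else r₀)
termination_by {y | p < y}.ncard
decreasing_by exact ncard_gt_of_lt (nextUp_gt h)

variable {hco : ∀ p₁ p₂ p : P, ¬ p₁ ≤ p₂ → ¬ p₂ ≤ p₁ → ¬ (p < p₁ ∧ p < p₂)}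
  {S : Set (P × Q)} {r₀ : Q}

lemma phiF_inv (hr : Aset S r₀ = ∅) :
    ∀ p, (∀ a ∈ Aset S (phiF hco S r₀ p), ¬ a ≤ p) ∧ (p, phiF hco S r₀ p) ∉ S := by
  have wf : WellFounded ((· > ·) : P → P → Prop) := wellFounded_gt
  intro p
  induction p using WellFounded.induction wf with
  | _ p IH =>
    rw [phiF]
    by_cases h : ∃ y, p < y
    · rw [dif_pos h]
      have hpar := IH (nextUp hco p) (nextUp_gt h)
      exact dsc_spec fun a ha hle => hpar.1 a ha (hle.trans (le_of_lt (nextUp_gt h)))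
    · rw [dif_neg h]
      exact dsc_spec fun a ha => absurd ha (by simp [hr])

lemma phiF_mono : Monotone (phiF hco S r₀) := by
  have wf : WellFounded ((· > ·) : P → P → Prop) := wellFounded_gt
  suffices H : ∀ p' p : P, p' ≤ p → phiF hco S r₀ p' ≤ phiF hco S r₀ p from
    fun a b h => H a b h
  intro p'
  induction p' using WellFounded.induction wf with
  | _ p' IH =>
    intro p hle
    rcases eq_or_lt_of_le hle with rfl | hlt
    · exact le_rfl
    · have h : ∃ y, p' < y := ⟨p, hlt⟩
      have h1 : phiF hco S r₀ p' ≤ phiF hco S r₀ (nextUp hco p') := by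
        conv_lhs => rw [phiF, dif_pos h]
        exact dsc_le
      exact h1.trans (IH (nextUp hco p') (nextUp_gt h) p (nextUp_le h hlt))

end Main2

section Main3
variable {P Q : Type*} [PartialOrder P] [PartialOrder Q] [Finite P] [Finite Q]

open scoped Classical in
noncomputable def psiF
    (hco : ∀ q₁ q₂ q : Q, ¬ q₁ ≤ q₂ → ¬ q₂ ≤ q₁ → ¬ (q < q₁ ∧ q < q₂))
    (S : Set (P × Q)) (hne : ∀ r : Q, (Aset S r).Nonempty) (q : Q) : P :=
  if h : ∃ y, q < y then
    (if h2 : ∃ a ∈ Aset S q, a ≤ psiF hco S hne (nextUp hco q) then h2.choose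
     else (hne q).choose)
  else (hne q).choose
termination_by {y | q < y}.ncard
decreasing_by exact ncard_gt_of_lt (nextUp_gt h)

variable {hco : ∀ q₁ q₂ q : Q, ¬ q₁ ≤ q₂ → ¬ q₂ ≤ q₁ → ¬ (q < q₁ ∧ q < q₂)}
  {S : Set (P × Q)} {hne : ∀ r : Q, (Aset S r).Nonempty}

lemma psiF_mem (q : Q) : psiF hco S hne q ∈ Aset S q := by
  rw [psiF]
  split
  · split
    · rename_i h2
      exact h2.choose_spec.1
    · exact (hne q).choose_spec
  · exact (hne q).choose_spec

lemma psiF_step {q : Q} (h : ∃ y, q < y) :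
    psiF hco S hne q ≤ psiF hco S hne (nextUp hco q) := by
  have hm := psiF_mem (hco := hco) (hne := hne) (nextUp hco q)
  rw [Aset_mem] at hm
  have h2 : ∃ a ∈ Aset S q, a ≤ psiF hco S hne (nextUp hco q) :=
    hm.2 q (nextUp_gt h)
  conv_lhs => rw [psiF, dif_pos h, dif_pos h2]
  exact (Exists.choose_spec h2).2

lemma psiF_mono : Monotone (psiF hco S hne) := by
  have wf : WellFounded ((· > ·) : Q → Q → Prop) := wellFounded_gt
  suffices H : ∀ q' q : Q, q' ≤ q → psiF hco S hne q' ≤ psiF hco S hne q from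
    fun a b h => H a b h
  intro q'
  induction q' using WellFounded.induction wf with
  | _ q' IH =>
    intro q hle
    rcases eq_or_lt_of_le hle with rfl | hlt
    · exact le_rfl
    · have h : ∃ y, q' < y := ⟨q, hlt⟩
      exact (psiF_step h).trans (IH (nextUp hco q') (nextUp_gt h) q (nextUp_le h hlt))

/-- The key combinatorial lemma (B). -/
lemma keyB (hcoP : ∀ p₁ p₂ p : P, ¬ p₁ ≤ p₂ → ¬ p₂ ≤ p₁ → ¬ (p < p₁ ∧ p < p₂))
    (hcoQ : ∀ q₁ q₂ q : Q, ¬ q₁ ≤ q₂ → ¬ q₂ ≤ q₁ → ¬ (q < q₁ ∧ q < q₂))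
    (S : Set (P × Q)) (hS : ∀ φ : P →o Q, ∃ p, (p, φ p) ∈ S) :
    ∃ ψ : Q →o P, ∀ q, (ψ q, q) ∈ S := by
  have hne : ∀ r : Q, (Aset S r).Nonempty := by
    intro r
    by_contra hr
    rw [Set.not_nonempty_iff_eq_empty] at hr
    obtain ⟨p, hp⟩ := hS ⟨phiF hcoP S r, phiF_mono⟩
    exact (phiF_inv hr p).2 hp
  exact ⟨⟨psiF hcoQ S hne, psiF_mono⟩, fun q => (Aset_mem.mp (psiF_mem q)).1⟩

end Main3

section Top
variable {P : Type*} [PartialOrder P] [Finite P]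

lemma exists_greatest_ge
    (hco : ∀ p₁ p₂ p : P, ¬ p₁ ≤ p₂ → ¬ p₂ ≤ p₁ → ¬ (p < p₁ ∧ p < p₂)) (p : P) :
    ∃ m, p ≤ m ∧ ∀ y, p ≤ y → y ≤ m := by
  classical
  cases nonempty_fintype P
  have hne : (Finset.univ.filter (fun y => p ≤ y)).Nonempty := ⟨p, by simp⟩
  obtain ⟨m, hm, hmax⟩ : ∃ m ∈ Finset.univ.filter (fun y => p ≤ y),
      ∀ x ∈ Finset.univ.filter (fun y => p ≤ y), ¬ m < x := by
    obtain ⟨m, hm⟩ := Finset.exists_maximal hne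
    exact ⟨m, hm.1, fun x hx (hlt : _ < _) => not_le_of_gt hlt (hm.2 hx (le_of_lt hlt))⟩
  simp only [Finset.mem_filter, Finset.mem_univ, true_and] at hm
  refine ⟨m, hm, fun y hy => ?_⟩
  by_contra hym
  have hmy : ¬ m ≤ y := by
    intro hle
    rcases eq_or_lt_of_le hle with rfl | hlt
    · exact hym le_rfl
    · exact hmax y (by simp [hy]) hlt
  rcases eq_or_lt_of_le hy with rfl | hy'
  · exact hym hm
  rcases eq_or_lt_of_le hm with rfl | hm'
  · exact hmy hy
  · exact hco y m p hym hmy ⟨hy', hm'⟩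

lemma exists_top [Nonempty P]
    (hconn : ∀ a b : P, Relation.ReflTransGen (fun x y : P => x ≤ y ∨ y ≤ x) a b)
    (hco : ∀ p₁ p₂ p : P, ¬ p₁ ≤ p₂ → ¬ p₂ ≤ p₁ → ¬ (p < p₁ ∧ p < p₂)) :
    ∃ t : P, ∀ p, p ≤ t := by
  choose M hM1 hM2 using exists_greatest_ge hco
  have hstep : ∀ x y : P, (x ≤ y ∨ y ≤ x) → M x = M y := by
    have key : ∀ x y : P, x ≤ y → M x = M y := by
      intro x y hxy
      have h1 : M y ≤ M x := hM2 x (M y) (hxy.trans (hM1 y))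
      have h2 : y ≤ M x := hM2 x y hxy
      exact le_antisymm (hM2 y (M x) h2) h1
    rintro x y (h | h)
    · exact key x y h
    · exact (key y x h).symm
  obtain ⟨x0⟩ := ‹Nonempty P›
  refine ⟨M x0, fun p => ?_⟩
  have : M p = M x0 := by
    induction hconn p x0 with
    | refl => rfl
    | tail _ hcomp ih => exact ih.trans (hstep _ _ hcomp)
  exact this ▸ hM1 p

lemma exists_fixed {t : P} (ht : ∀ p, p ≤ t) (f : P →o P) : ∃ p, f p = p := by
  have anti : ∀ m n : ℕ, m ≤ n → f^[n] t ≤ f^[m] t := by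
    have step : ∀ n : ℕ, f^[n + 1] t ≤ f^[n] t := by
      intro n
      induction n with
      | zero => exact ht _
      | succ n ih =>
        rw [Function.iterate_succ_apply' (⇑f) n t] at ih
        rw [Function.iterate_succ_apply' (⇑f) (n + 1) t, Function.iterate_succ_apply' (⇑f) n t]
        exact f.monotone ih
    intro m n hmn
    induction hmn with
    | refl => exact le_rfl
    | step _ ih => exact le_trans (by exact step _) (by assumption)
  obtain ⟨i, j, hij, heq⟩ := Finite.exists_ne_map_eq_of_infinite fun n : ℕ => f^[n] t
  rcases hij.lt_or_gt with h | h
  · refine ⟨f^[i] t, ?_⟩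
    have h1 : f^[i + 1] t ≤ f^[i] t := anti i (i + 1) (Nat.le_succ i)
    have h2 : f^[i] t ≤ f^[i + 1] t := heq ▸ anti (i + 1) j h
    have h3 : f^[i + 1] t = f^[i] t := le_antisymm h1 h2
    rw [Function.iterate_succ_apply'] at h3
    exact h3
  · refine ⟨f^[j] t, ?_⟩
    have h1 : f^[j + 1] t ≤ f^[j] t := anti j (j + 1) (Nat.le_succ j)
    have h2 : f^[j] t ≤ f^[j + 1] t := heq ▸ anti (j + 1) i h
    have h3 : f^[j + 1] t = f^[j] t := le_antisymm h1 h2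
    rw [Function.iterate_succ_apply'] at h3
    exact h3
end Top

section KeyA
variable {P Q : Type*} [PartialOrder P] [PartialOrder Q] [Finite P] [Nonempty P]

lemma keyA
    (hconn : ∀ a b : P, Relation.ReflTransGen (fun x y : P => x ≤ y ∨ y ≤ x) a b)
    (hco : ∀ p₁ p₂ p : P, ¬ p₁ ≤ p₂ → ¬ p₂ ≤ p₁ → ¬ (p < p₁ ∧ p < p₂))
    (φ : P →o Q) (ψ : Q →o P) : ∃ q, φ (ψ q) = q := by
  obtain ⟨t, ht⟩ := exists_top hconn hco
  obtain ⟨p, hp⟩ := exists_fixed ht (ψ.comp φ)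
  exact ⟨φ p, by rw [show ψ (φ p) = p from hp]⟩
end KeyA

section Algebra
open MvPolynomial

lemma prodX_fin {σ α R : Type*} [CommSemiring R] (g : α → σ) (s : Finset α) :
    (∏ a ∈ s, (X (g a) : MvPolynomial σ R)) =
      monomial (∑ a ∈ s, Finsupp.single (g a) 1) 1 := by
  classical
  induction s using Finset.induction_on with
  | empty => simp
  | insert _ _ h ih =>
    rw [Finset.prod_insert h, Finset.sum_insert h, ih, monomial_single_add, pow_one]

lemma sum_single_apply {P Q : Type*} [Fintype Q] [DecidableEq P] [DecidableEq Q]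
    (ψ : Q → P) (p₀ : P) (q₀ : Q) :
    (∑ q : Q, Finsupp.single ((ψ q, q) : P × Q) (1 : ℕ)) (p₀, q₀) =
      if ψ q₀ = p₀ then 1 else 0 := by
  rw [Finsupp.finset_sum_apply, Finset.sum_eq_single q₀]
  · rw [Finsupp.single_apply]
    simp [Prod.ext_iff, eq_comm]
  · intro b _ hb
    rw [Finsupp.single_apply, if_neg]
    intro h
    exact hb (congrArg Prod.snd h)
  · simp

lemma setDual_eq {P Q K : Type*} [PartialOrder P] [PartialOrder Q] [Field K] (φ : P →o Q) :
    { u : MvPolynomial (P × Q) K | ∃ p : P, u = X (p, φ p) } =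
      X '' (Set.range fun p : P => ((p, φ p) : P × Q)) := by
  ext u
  constructor
  · rintro ⟨p, rfl⟩
    exact ⟨(p, φ p), ⟨p, rfl⟩, rfl⟩
  · rintro ⟨i, ⟨p, rfl⟩, rfl⟩
    exact ⟨p, rfl⟩

lemma setTau_eq {P Q K : Type*} [PartialOrder P] [PartialOrder Q] [Fintype Q] [Field K] :
    { u : MvPolynomial (P × Q) K | ∃ ψ : Q →o P, u = ∏ q : Q, X (ψ q, q) } =
      (fun e => monomial e (1 : K)) ''
        { e : (P × Q) →₀ ℕ | ∃ ψ : Q →o P, e = ∑ q : Q, Finsupp.single (ψ q, q) 1 } := by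
  ext u
  constructor
  · rintro ⟨ψ, rfl⟩
    exact ⟨∑ q : Q, Finsupp.single (ψ q, q) 1, ⟨ψ, rfl⟩,
      (prodX_fin (fun q => ((ψ q, q) : P × Q)) Finset.univ).symm⟩
  · rintro ⟨e, ⟨ψ, rfl⟩, rfl⟩
    exact ⟨ψ, (prodX_fin (fun q => ((ψ q, q) : P × Q)) Finset.univ).symm⟩

end Algebra

/-- If `P` is connected, not a chain, and co-rooted, then
`L(P,Q)^∨ = L(Q,P)^τ` iff `Q` is co-rooted. -/
theorem stmt_6 (P Q K : Type*) [PartialOrder P] [PartialOrder Q]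
    [Fintype P] [Fintype Q] [Nonempty P] [Nonempty Q] [Field K]
    (hconn : PosetConnected P) (hchain : ¬ IsChainPoset P) (hcoroot : CoRooted P) :
    isoDual P Q K = isoTau P Q K ↔ CoRooted Q := by
  classical
  constructor
  · -- equality implies `Q` co-rooted
    intro heq
    by_contra hQ
    rw [CoRooted] at hQ; push_neg at hQ
    obtain ⟨q₁, q₂, q₀, h12, h21, h01, h02⟩ := hQ
    rw [IsChainPoset] at hchain; push_neg at hchain
    obtain ⟨a, b, hab, hba⟩ := hchain
    have hq12 : q₁ ≠ q₂ := fun h => h12 (le_of_eq h)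
    set S : Set (P × Q) := {x | (x.2 ≠ q₁ ∧ x.2 ≠ q₂) ∨ x = (a, q₁) ∨ x = (b, q₂)} with hSdef
    set e : (P × Q) →₀ ℕ := Finsupp.equivFunOnFinite.symm (fun x => if x ∈ S then 1 else 0)
      with hedef
    have he : ∀ x, e x = if x ∈ S then 1 else 0 := fun x => rfl
    have hsupp : (monomial e (1 : K)).support = {e} := by
      rw [support_monomial, if_neg one_ne_zero]
    have hin : (monomial e (1 : K)) ∈ isoDual P Q K := by
      rw [isoDual, Ideal.mem_iInf]
      intro φ
      rw [setDual_eq, mem_ideal_span_X_image]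
      intro m hm
      rw [hsupp, Finset.mem_singleton] at hm
      subst hm
      suffices hpS : ∃ p, ((p, φ p) : P × Q) ∈ S by
        obtain ⟨p, hp⟩ := hpS
        refine ⟨(p, φ p), ⟨p, rfl⟩, ?_⟩
        rw [he, if_pos hp]
        exact one_ne_zero
      by_cases hc : ∃ p, φ p ≠ q₁ ∧ φ p ≠ q₂
      · obtain ⟨p, hp⟩ := hc
        exact ⟨p, Or.inl hp⟩
      · push_neg at hc
        have hval : ∀ p, φ p = q₁ ∨ φ p = q₂ := by
          intro p
          by_cases h : φ p = q₁
          · exact Or.inl h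
          · exact Or.inr (hc p h)
        have hstep : ∀ u v : Q, (u = q₁ ∨ u = q₂) → (v = q₁ ∨ v = q₂) →
            (u ≤ v ∨ v ≤ u) → u = v := by
          rintro u v (rfl | rfl) (rfl | rfl) (h | h) <;>
            first
              | rfl
              | exact absurd h h12
              | exact absurd h h21
        have hconst : ∀ x y : P,
            Relation.ReflTransGen (fun x y : P => x ≤ y ∨ y ≤ x) x y → φ x = φ y := by
          intro x y hxy
          induction hxy with
          | refl => rfl
          | tail _ hc' ih =>
            refine ih.trans (hstep _ _ (hval _) (hval _) ?_)
            rcases hc' with h | h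
            · exact Or.inl (φ.monotone h)
            · exact Or.inr (φ.monotone h)
        rcases hval a with ha | ha
        · exact ⟨a, Or.inr (Or.inl (by rw [ha]))⟩
        · have hb : φ b = q₂ := (hconst b a (hconn b a)).trans ha
          exact ⟨b, Or.inr (Or.inr (by rw [hb]))⟩
    have hnotin : (monomial e (1 : K)) ∉ isoTau P Q K := by
      rw [isoTau, setTau_eq, mem_ideal_span_monomial_image]
      intro hmem
      obtain ⟨e', ⟨ψ, rfl⟩, hle⟩ := hmem e (by rw [hsupp]; exact Finset.mem_singleton_self e)
      have hSmem : ∀ q : Q, ((ψ q, q) : P × Q) ∈ S := by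
        intro q
        have h1 : (∑ q' : Q, Finsupp.single ((ψ q', q') : P × Q) 1) (ψ q, q) = 1 := by
          rw [sum_single_apply]
          simp
        have h2 := Finsupp.le_def.mp hle (ψ q, q)
        rw [h1, he] at h2
        by_contra hns
        rw [if_neg hns] at h2
        omega
      have hq1 : ψ q₁ = a := by
        rcases hSmem q₁ with ⟨h, _⟩ | h | h
        · exact absurd rfl h
        · exact (Prod.ext_iff.mp h).1
        · exact absurd (Prod.ext_iff.mp h).2 hq12
      have hq2 : ψ q₂ = b := by
        rcases hSmem q₂ with ⟨_, h⟩ | h | h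
        · exact absurd rfl h
        · exact absurd (Prod.ext_iff.mp h).2 (Ne.symm hq12)
        · exact (Prod.ext_iff.mp h).1
      have ha0 : ψ q₀ ≤ a := hq1 ▸ ψ.monotone h01.le
      have hb0 : ψ q₀ ≤ b := hq2 ▸ ψ.monotone h02.le
      have hlta : ψ q₀ < a := lt_of_le_of_ne ha0 (fun h => hab (h ▸ hb0))
      have hltb : ψ q₀ < b := lt_of_le_of_ne hb0 (fun h => hba (h ▸ ha0))
      exact hcoroot a b (ψ q₀) hab hba ⟨hlta, hltb⟩
    rw [heq] at hin
    exact hnotin hin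
  · -- Q co-rooted implies equality
    intro hcoQ
    apply le_antisymm
    · -- dual ≤ tau
      intro f hf
      rw [isoTau, setTau_eq, mem_ideal_span_monomial_image]
      intro m hm
      have hS : ∀ φ : P →o Q, ∃ p : P, ((p, φ p) : P × Q) ∈ {x : P × Q | m x ≠ 0} := by
        intro φ
        rw [isoDual] at hf
        have h1 := Ideal.mem_iInf.mp hf φ
        rw [setDual_eq, mem_ideal_span_X_image] at h1
        obtain ⟨i, ⟨p, rfl⟩, hne0⟩ := h1 m hm
        exact ⟨p, hne0⟩
      obtain ⟨ψ, hψ⟩ := keyB hcoroot hcoQ _ hS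
      refine ⟨∑ q : Q, Finsupp.single (ψ q, q) 1, ⟨ψ, rfl⟩, ?_⟩
      rw [Finsupp.le_def]
      rintro ⟨p₀, q₀⟩
      rw [sum_single_apply]
      split
      · rename_i h
        have hne0 : m (ψ q₀, q₀) ≠ 0 := hψ q₀
        rw [h] at hne0
        omega
      · exact Nat.zero_le _
    · -- tau ≤ dual
      rw [isoTau]
      apply Ideal.span_le.mpr
      rintro u ⟨ψ, rfl⟩
      rw [SetLike.mem_coe, isoDual, Ideal.mem_iInf]
      intro φ
      obtain ⟨q₀, hq₀⟩ := keyA hconn hcoroot φ ψ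
      rw [← Finset.mul_prod_erase Finset.univ _ (Finset.mem_univ q₀)]
      exact Ideal.mul_mem_right _ _ (Ideal.subset_span ⟨ψ q₀, by rw [hq₀]⟩)
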